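/- arXiv:2203.06166 — 4 statements merged into one kernel-verified Lean document; each statement's English description precedes it below -/
import Mathlib

section
/- SEP₁ <_W EC₁ <_W EC: the restricted separation problem is strictly continuously Weihrauch below EC₁, and EC₁ is strictly continuously Weihrauch below EC. -/
open Filter Topology

abbrev Baire : Type := ℕ → ℕ

/-- The pairing `⟨p,q⟩(2n) = p(n)`, `⟨p,q⟩(2n+1) = q(n)`. -/
def pairB (p q : Baire) : Baire := fun n => if n % 2 = 0 then p (n / 2) else q (n / 2)

/-- A problem: a partial multivalued function on Baire space. -/
structure Problem where
  dom : Set Baire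
  sol : Baire → Set Baire

/-- Continuous Weihrauch reducibility. -/
def WRed (f g : Problem) : Prop :=
  ∃ (Kd Hd : Set Baire) (K H : Baire → Baire),
    ContinuousOn K Kd ∧ ContinuousOn H Hd ∧
      ∀ p ∈ f.dom, p ∈ Kd ∧ K p ∈ g.dom ∧
        ∀ q ∈ g.sol (K p), pairB p q ∈ Hd ∧ H (pairB p q) ∈ f.sol p

/-- Strong continuous Weihrauch reducibility. -/
def SWRed (f g : Problem) : Prop :=
  ∃ (Kd Hd : Set Baire) (K H : Baire → Baire),
    ContinuousOn K Kd ∧ ContinuousOn H Hd ∧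
      ∀ p ∈ f.dom, p ∈ Kd ∧ K p ∈ g.dom ∧
        ∀ q ∈ g.sol (K p), q ∈ Hd ∧ H q ∈ f.sol p

def WEquiv (f g : Problem) : Prop := WRed f g ∧ WRed g f
def SWEquiv (f g : Problem) : Prop := SWRed f g ∧ SWRed g f
def WLt (f g : Problem) : Prop := WRed f g ∧ ¬ WRed g f

/-- `range(p-1)`. -/
def rangeM (p : Baire) : Set ℕ := {n | ∃ i, p i = n + 1}

/-- Characteristic function of a set of naturals. -/
noncomputable def chi (A : Set ℕ) : Baire := A.indicator fun _ => 1

noncomputable def EC : Problem where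
  dom := Set.univ
  sol := fun p => {chi (rangeM p)}

noncomputable def EC1 : Problem where
  dom := {p | ((rangeM p)ᶜ).encard ≤ 1}
  sol := fun p => {chi (rangeM p)}

def pfst (r : Baire) : Baire := fun n => r (2 * n)
def psnd (r : Baire) : Baire := fun n => r (2 * n + 1)

noncomputable def SEP : Problem where
  dom := {r | rangeM (pfst r) ∩ rangeM (psnd r) = ∅}
  sol := fun r =>
    {s | ∃ A : Set ℕ, s = chi A ∧ rangeM (pfst r) ⊆ A ∧ A ⊆ (rangeM (psnd r))ᶜ}

noncomputable def SEP1 : Problem where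
  dom := {r | rangeM (pfst r) ∩ rangeM (psnd r) = ∅ ∧
    ((rangeM (pfst r) ∪ rangeM (psnd r))ᶜ).encard ≤ 1}
  sol := SEP.sol

/- rationals -/
def ratEnum (i : ℕ) : ℚ :=
  ((i.unpair.1 : ℚ) - (i.unpair.2.unpair.1 : ℚ)) / ((i.unpair.2.unpair.2 : ℚ) + 1)

def rhoCauchy (p : Baire) (x : ℝ) : Prop :=
  ∀ n, |(ratEnum (p n) : ℝ) - x| ≤ (2 : ℝ) ^ (-(n : ℤ))

def rhoNaive (p : Baire) (x : ℝ) : Prop :=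
  Tendsto (fun n => ((ratEnum (p n) : ℝ))) atTop (nhds x)

def rhoLt (p : Baire) (x : ℝ) : Prop := rangeM p = {n | (ratEnum n : ℝ) < x}
def rhoGt (p : Baire) (x : ℝ) : Prop := rangeM p = {n | x < (ratEnum n : ℝ)}

def rhoCfLt (p : Baire) (x : ℝ) : Prop :=
  (∀ n, p n ≤ 1) ∧ ∀ n, (p n = 1 ↔ (ratEnum n : ℝ) < x)
def rhoCfGt (p : Baire) (x : ℝ) : Prop :=
  (∀ n, p n ≤ 1) ∧ ∀ n, (p n = 1 ↔ x < (ratEnum n : ℝ))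

noncomputable def cfTail : List ℕ → ℝ
  | [] => 0
  | b :: l => 1 / ((b : ℝ) + cfTail l)

noncomputable def cfApprox (p : Baire) (k : ℕ) : ℝ :=
  ((Denumerable.ofNat ℤ (p 0) : ℤ) : ℝ) + cfTail ((List.range k).map fun i => p (i + 1))

def rhoCf (p : Baire) (x : ℝ) : Prop :=
  ((∀ i, 1 ≤ i → 1 ≤ p i) ∧ Tendsto (cfApprox p) atTop (nhds x)) ∨
    (∃ k, 1 ≤ k ∧ p k = 0 ∧ (∀ i, 1 ≤ i → i < k → 1 ≤ p i) ∧
      (2 ≤ k → 2 ≤ p (k - 1)) ∧ x = cfApprox p (k - 1))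

def rhoDec (p : Baire) (x : ℝ) : Prop :=
  (∀ n, 1 ≤ n → p n ≤ 9) ∧
    x = ((Denumerable.ofNat ℤ (p 0) : ℤ) : ℝ) + ∑' n : ℕ, (p (n + 1) : ℝ) / 10 ^ (n + 1)

/-- The implication problem between two representations of ℝ. -/
def implProblem (d1 d2 : Baire → ℝ → Prop) : Problem where
  dom := {p | ∃ x, d1 p x}
  sol := fun p => {q | ∃ x, d1 p x ∧ d2 q x}

/- trees / WKL / choice on Cantor space -/
def wordCode : List Bool → ℕ
  | [] => 0
  | b :: w => 2 * wordCode w + (if b then 2 else 1)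

def prefixList (x : Baire) (k : ℕ) : List Bool := (List.range k).map fun i => decide (x i = 1)

def isTreeCode (t : Baire) : Prop :=
  (∀ n, t n ≤ 1) ∧
    ∀ w v : List Bool, w <+: v → t (wordCode v) = 1 → t (wordCode w) = 1

def WKL : Problem where
  dom := {t | isTreeCode t ∧ {w : List Bool | t (wordCode w) = 1}.Infinite}
  sol := fun t => {x | (∀ n, x n ≤ 1) ∧ ∀ k, t (wordCode (prefixList x k)) = 1}

def Ap (p : Baire) : Set Baire :=
  {x | (∀ n, x n ≤ 1) ∧ ∀ k, wordCode (prefixList x k) ∉ rangeM p}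

def CCantor : Problem where
  dom := {p | (Ap p).Nonempty}
  sol := Ap

def Cle2 : Problem where
  dom := {p | (Ap p).Nonempty ∧ (Ap p).encard ≤ 2}
  sol := Ap

/- limit and parallelization -/
def projCount (r : Baire) (n : ℕ) : Baire := fun k => r (Nat.pair n k)

def limP : Problem where
  dom := {r | ∃ q : Baire, ∀ k, Tendsto (fun n => projCount r n k) atTop (nhds (q k))}
  sol := fun r => {q | ∀ k, Tendsto (fun n => projCount r n k) atTop (nhds (q k))}

def parallel (f : Problem) : Problem where
  dom := {r | ∀ n, projCount r n ∈ f.dom}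
  sol := fun r => {s | ∀ n, projCount s n ∈ f.sol (projCount r n)}

def MCT : Problem where
  dom := {r | ∃ xs : ℕ → ℝ, (∀ n, rhoCauchy (projCount r n) (xs n)) ∧
    Monotone xs ∧ BddAbove (Set.range xs)}
  sol := fun r => {q | ∃ xs : ℕ → ℝ, (∀ n, rhoCauchy (projCount r n) (xs n)) ∧
    Monotone xs ∧ BddAbove (Set.range xs) ∧ rhoCauchy q (⨆ n, xs n)}

/- SORT and RAT -/
open Classical in
noncomputable def sortOut (p : Baire) : Baire := fun k =>
  if {i | p i = 0}.Infinite then 0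
  else if k < {i | p i = 0}.ncard then 0 else 1

noncomputable def SORT : Problem where
  dom := {p | ∀ n, p n ≤ 1}
  sol := fun p => {sortOut p}

def znk (n : ℕ) : Baire := fun k => if k < n then 0 else 1

def RAT : Problem where
  dom := {p | ∃ x, rhoCauchy p x}
  sol := fun p => {s | ∃ x, rhoCauchy p x ∧
    ((∃ n, x = (ratEnum n : ℝ) ∧ s = znk n) ∨
      ((∀ r : ℚ, x ≠ (r : ℝ)) ∧ s = fun _ => 0))}

/- omniscience principles -/
def projFin (m i : ℕ) (r : Baire) : Baire := fun k => r (m * k + i - 1)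
def isZeroSeq (p : Baire) : Prop := ∀ k, p k = 0
def constSeq (i : ℕ) : Baire := fun _ => i

noncomputable def LPOn (n : ℕ) : Problem where
  dom := Set.univ
  sol := fun r => {constSeq ({i | 1 ≤ i ∧ i ≤ n ∧ isZeroSeq (projFin n i r)}.ncard)}

def LLPOn (n : ℕ) : Problem where
  dom := {r | {i | 1 ≤ i ∧ i ≤ n ∧ ¬ isZeroSeq (projFin n i r)}.encard ≤ 1}
  sol := fun r => {s | ∃ i, 1 ≤ i ∧ i ≤ n ∧ isZeroSeq (projFin n i r) ∧ s = constSeq i}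

def MLPOn (n : ℕ) : Problem where
  dom := {r | ∃ i, 1 ≤ i ∧ i ≤ n ∧ isZeroSeq (projFin n i r)}
  sol := fun r => {s | ∃ i, 1 ≤ i ∧ i ≤ n ∧ isZeroSeq (projFin n i r) ∧ s = constSeq i}

def LPO : Problem where
  dom := Set.univ
  sol := fun p => {s | (isZeroSeq p ∧ s = constSeq 1) ∨ (¬ isZeroSeq p ∧ s = constSeq 0)}

/- choice problems on ℕ etc. -/
def Cfin (n : ℕ) : Problem where
  dom := {p | ∃ i, i < n ∧ i ∉ rangeM p}
  sol := fun p => {s | ∃ i, i < n ∧ i ∉ rangeM p ∧ s = constSeq i}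

def ACCfin (n : ℕ) : Problem where
  dom := {p | (∃ i, i < n ∧ i ∉ rangeM p) ∧ ({i | i < n} ∩ rangeM p).encard ≤ 1}
  sol := (Cfin n).sol

def CNat : Problem where
  dom := {p | ∃ i, i ∉ rangeM p}
  sol := fun p => {s | ∃ i, i ∉ rangeM p ∧ s = constSeq i}

/- differentiation -/
instance : Countable (AddMonoidAlgebra ℚ ℕ) :=
  AddMonoidAlgebra.coeff_injective.countable

instance : Countable (Polynomial ℚ) :=
  Polynomial.toFinsupp_injective.countable

noncomputable def polyEnum : ℕ → Polynomial ℚ :=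
  (exists_surjective_nat (Polynomial ℚ)).choose

noncomputable def polyFun (k : ℕ) : C(Set.Icc (0:ℝ) 1, ℝ) :=
  ⟨fun x => ((polyEnum k).map (algebraMap ℚ ℝ)).eval (x : ℝ),
   (((polyEnum k).map (algebraMap ℚ ℝ)).continuous).comp continuous_subtype_val⟩

noncomputable def deltaC (p : Baire) (f : C(Set.Icc (0:ℝ) 1, ℝ)) : Prop :=
  ∀ n, ‖f - polyFun (p n)‖ ≤ (2 : ℝ) ^ (-(n : ℤ))

def IsDerivOn (f g : C(Set.Icc (0:ℝ) 1, ℝ)) : Prop :=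
  ∀ x : Set.Icc (0:ℝ) 1,
    HasDerivWithinAt (Set.IccExtend (by norm_num : (0:ℝ) ≤ 1) f) (g x) (Set.Icc 0 1) (x : ℝ)

noncomputable def diffP : Problem where
  dom := {p | ∃ f g, deltaC p f ∧ IsDerivOn f g}
  sol := fun p => {q | ∃ f g, deltaC p f ∧ IsDerivOn f g ∧ deltaC q g}


/- ===================== auxiliary lemmas ===================== -/

section Aux

lemma mem_rangeM {p : Baire} {n : ℕ} : n ∈ rangeM p ↔ ∃ i, p i = n + 1 := Iff.rfl

lemma chi_mem {A : Set ℕ} {n : ℕ} (h : n ∈ A) : chi A n = 1 :=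
  Set.indicator_of_mem h _

lemma chi_not_mem {A : Set ℕ} {n : ℕ} (h : n ∉ A) : chi A n = 0 :=
  Set.indicator_of_notMem h _

lemma chi_le_one (A : Set ℕ) (n : ℕ) : chi A n ≤ 1 := by
  by_cases h : n ∈ A
  · rw [chi_mem h]
  · rw [chi_not_mem h]; omega

lemma pairB_even (p q : Baire) (m : ℕ) : pairB p q (2 * m) = p m := by
  simp [pairB, Nat.mul_div_cancel_left, Nat.mul_mod_right]

lemma pairB_odd (p q : Baire) (m : ℕ) : pairB p q (2 * m + 1) = q m := by
  have h1 : (2 * m + 1) % 2 = 1 := by omega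
  have h2 : (2 * m + 1) / 2 = m := by omega
  simp [pairB, h1, h2]

lemma pairB_agree {p p' q q' : Baire} {L : ℕ}
    (hp : ∀ i < L, p i = p' i) (hq : ∀ i < L, q i = q' i) :
    ∀ i < L, pairB p q i = pairB p' q' i := by
  intro i hi
  have hd : i / 2 < L := lt_of_le_of_lt (Nat.div_le_self i 2) hi
  unfold pairB
  by_cases h : i % 2 = 0
  · simp [h, hp _ hd]
  · simp [h, hq _ hd]

/-- Cylinders. -/
def cyl (y : Baire) (L : ℕ) : Set Baire := {x | ∀ i < L, x i = y i}

lemma self_mem_cyl (y : Baire) (L : ℕ) : y ∈ cyl y L := fun _ _ => rfl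

lemma isOpen_cyl (y : Baire) (L : ℕ) : IsOpen (cyl y L) := by
  have : cyl y L = ⋂ i ∈ Finset.range L, (fun x : Baire => x i) ⁻¹' {y i} := by
    ext x
    simp [cyl, Finset.mem_range]
  rw [this]
  exact isOpen_biInter_finset fun i _ =>
    (isOpen_discrete _).preimage (continuous_apply i)

lemma exists_cyl_subset {U : Set Baire} (hU : IsOpen U) {x : Baire} (hx : x ∈ U) :
    ∃ L, cyl x L ⊆ U := by
  obtain ⟨I, u, h1, h2⟩ := isOpen_pi_iff.mp hU x hx
  refine ⟨I.sup id + 1, fun y hy => h2 ?_⟩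
  intro i hi
  have hle : i ≤ I.sup id := Finset.le_sup (f := id) hi
  have : y i = x i := hy i (Nat.lt_succ_of_le hle)
  rw [this]
  exact (h1 i hi).2

/-- The "use" of a continuous-on-its-domain functional at a point, for one output
coordinate. -/
lemma exists_use {F : Baire → Baire} {D : Set Baire} (hF : ContinuousOn F D)
    {x₀ : Baire} (hx : x₀ ∈ D) (n : ℕ) :
    ∃ L, ∀ x ∈ D, (∀ i < L, x i = x₀ i) → F x n = F x₀ n := by
  have h1 : ContinuousWithinAt (fun x => F x n) D x₀ :=
    ((continuous_apply n).continuousAt).comp_continuousWithinAt (hF x₀ hx)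
  have h2 : (fun x => F x n) ⁻¹' {F x₀ n} ∈ nhdsWithin x₀ D :=
    h1.preimage_mem_nhdsWithin ((isOpen_discrete _).mem_nhds rfl)
  rw [mem_nhdsWithin] at h2
  obtain ⟨U, hUo, hxU, hsub⟩ := h2
  obtain ⟨L, hL⟩ := exists_cyl_subset hUo hxU
  exact ⟨L, fun x hxD hagree => hsub ⟨hL hagree, hxD⟩⟩

/-- The "use" for finitely many output coordinates. -/
lemma exists_use_fin {F : Baire → Baire} {D : Set Baire} (hF : ContinuousOn F D)
    {x₀ : Baire} (hx : x₀ ∈ D) (N : ℕ) :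
    ∃ L, ∀ x ∈ D, (∀ i < L, x i = x₀ i) → ∀ j < N, F x j = F x₀ j := by
  choose L hL using fun j : ℕ => exists_use hF hx j
  refine ⟨(Finset.range N).sup L, fun x hxD hagree j hj => hL j x hxD ?_⟩
  intro i hi
  exact hagree i (lt_of_lt_of_le hi (Finset.le_sup (Finset.mem_range.mpr hj)))

lemma contOn_of_locallyConstant {F : Baire → Baire} {D : Set Baire}
    (h : ∀ x₀ ∈ D, ∀ n, ∃ L, ∀ x ∈ D, (∀ i < L, x i = x₀ i) → F x n = F x₀ n) :
    ContinuousOn F D := by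
  intro x₀ hx₀
  rw [ContinuousWithinAt, tendsto_pi_nhds]
  intro n
  obtain ⟨L, hL⟩ := h x₀ hx₀ n
  have hev : ∀ᶠ x in nhdsWithin x₀ D, F x n = F x₀ n := by
    rw [eventually_iff, mem_nhdsWithin]
    exact ⟨cyl x₀ L, isOpen_cyl _ _, self_mem_cyl _ _,
      fun x hx => hL x hx.2 hx.1⟩
  have : Filter.Tendsto (fun _ : Baire => F x₀ n) (nhdsWithin x₀ D) (nhds (F x₀ n)) :=
    tendsto_const_nhds
  exact this.congr' (hev.mono fun x hx => hx.symm)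

lemma rangeM_eq_union (r : Baire) :
    rangeM r = rangeM (pfst r) ∪ rangeM (psnd r) := by
  ext n
  constructor
  · rintro ⟨k, hk⟩
    rcases Nat.even_or_odd k with ⟨t, ht⟩ | ⟨t, ht⟩
    · exact Or.inl ⟨t, by rw [pfst]; rw [show 2 * t = k by omega]; exact hk⟩
    · exact Or.inr ⟨t, by rw [psnd]; rw [show 2 * t + 1 = k by omega]; exact hk⟩
  · rintro (⟨t, ht⟩ | ⟨t, ht⟩)
    · exact ⟨2 * t, ht⟩
    · exact ⟨2 * t + 1, ht⟩

end Aux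

section MainLemmas

lemma red_EC1_EC : WRed EC1 EC := by
  refine ⟨Set.univ, Set.univ, id, fun x n => x (2 * n + 1), continuousOn_id,
    (continuous_pi fun n => continuous_apply (2 * n + 1)).continuousOn, ?_⟩
  intro p _
  refine ⟨trivial, trivial, ?_⟩
  rintro q hq
  refine ⟨trivial, ?_⟩
  have : (fun x : Baire => fun n => x (2 * n + 1)) (pairB p q) = q :=
    funext fun n => pairB_odd p q n
  rw [this]
  exact hq

lemma red_SEP1_EC1 : WRed SEP1 EC1 := by
  classical
  set Hd : Set Baire :=
    {x | ∀ n, x (2 * n + 1) ≠ 0 →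
      ∃ t, x (2 * (2 * t)) = n + 1 ∨ x (2 * (2 * t + 1)) = n + 1} with hHddef
  set H : Baire → Baire := fun x n =>
    if x (2 * n + 1) = 0 then 0
    else if h : ∃ t, x (2 * (2 * t)) = n + 1 ∨ x (2 * (2 * t + 1)) = n + 1 then
      (if x (2 * (2 * Nat.find h)) = n + 1 then 1 else 0)
    else 0 with hHdef
  have hHcont : ContinuousOn H Hd := by
    apply contOn_of_locallyConstant
    intro x₀ hx₀ n
    by_cases h0 : x₀ (2 * n + 1) = 0
    · refine ⟨2 * n + 2, fun x hx hagree => ?_⟩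
      have hx1 : x (2 * n + 1) = 0 := by rw [hagree _ (by omega)]; exact h0
      simp only [hHdef, hx1, h0, if_true]
    · have hex : ∃ t, x₀ (2 * (2 * t)) = n + 1 ∨ x₀ (2 * (2 * t + 1)) = n + 1 :=
        hx₀ n h0
      set t₀ := Nat.find hex with ht₀
      refine ⟨max (2 * n + 2) (4 * t₀ + 3), fun x hx hagree => ?_⟩
      have hx1 : x (2 * n + 1) = x₀ (2 * n + 1) := hagree _ (by omega)
      have hidx : ∀ t ≤ t₀, x (2 * (2 * t)) = x₀ (2 * (2 * t)) ∧
          x (2 * (2 * t + 1)) = x₀ (2 * (2 * t + 1)) := by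
        intro t ht
        constructor <;> apply hagree <;> omega
      have hxex : ∃ t, x (2 * (2 * t)) = n + 1 ∨ x (2 * (2 * t + 1)) = n + 1 := by
        obtain h | h := Nat.find_spec hex
        · exact ⟨t₀, Or.inl (by rw [(hidx t₀ le_rfl).1]; exact h)⟩
        · exact ⟨t₀, Or.inr (by rw [(hidx t₀ le_rfl).2]; exact h)⟩
      have hfind : Nat.find hxex = t₀ := by
        have hle : Nat.find hxex ≤ t₀ := by
          apply Nat.find_min' hxex
          obtain h | h := Nat.find_spec hex
          · exact Or.inl (by rw [(hidx t₀ le_rfl).1]; exact h)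
          · exact Or.inr (by rw [(hidx t₀ le_rfl).2]; exact h)
        have hge : t₀ ≤ Nat.find hxex := by
          apply Nat.find_min' hex
          obtain h | h := Nat.find_spec hxex
          · exact Or.inl (by rw [← (hidx _ hle).1]; exact h)
          · exact Or.inr (by rw [← (hidx _ hle).2]; exact h)
        omega
      have hval : x (2 * (2 * Nat.find hxex)) = x₀ (2 * (2 * Nat.find hex)) := by
        rw [hfind]; exact (hidx t₀ le_rfl).1
      simp only [hHdef, hx1, h0, if_neg h0, dif_pos hxex, dif_pos hex, hval]
      simp
  refine ⟨Set.univ, Hd, id, H, continuousOn_id, hHcont, ?_⟩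
  rintro r ⟨hdisj, hcard⟩
  have hrange := rangeM_eq_union r
  refine ⟨trivial, ?_, ?_⟩
  · show ((rangeM r)ᶜ).encard ≤ 1
    rw [hrange]; exact hcard
  rintro q hq
  have hq' : q = chi (rangeM r) := hq
  have hdec : ∀ n, pairB r q (2 * n + 1) = q n := fun n => pairB_odd r q n
  have hfst : ∀ t, pairB r q (2 * (2 * t)) = pfst r t := fun t => pairB_even r q (2 * t)
  have hsnd : ∀ t, pairB r q (2 * (2 * t + 1)) = psnd r t := fun t => pairB_even r q (2 * t + 1)
  have hmemHd : pairB r q ∈ Hd := by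
    intro n hne
    rw [hdec] at hne
    have hn : n ∈ rangeM r := by
      by_contra hc
      rw [hq'] at hne; exact hne (chi_not_mem hc)
    rw [hrange] at hn
    obtain ⟨t, ht⟩ | ⟨t, ht⟩ := hn
    · exact ⟨t, Or.inl (by rw [hfst]; exact ht)⟩
    · exact ⟨t, Or.inr (by rw [hsnd]; exact ht)⟩
  refine ⟨hmemHd, ?_⟩
  show H (pairB r q) ∈ SEP.sol r
  refine ⟨rangeM (pfst r), ?_, subset_rfl, ?_⟩
  · funext n
    by_cases hn : n ∈ rangeM r
    · have hne : pairB r q (2 * n + 1) ≠ 0 := by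
        rw [hdec, hq', chi_mem hn]; omega
      have hex : ∃ t, pairB r q (2 * (2 * t)) = n + 1 ∨
          pairB r q (2 * (2 * t + 1)) = n + 1 := hmemHd n hne
      simp only [hHdef, if_neg hne, dif_pos hex]
      by_cases hv : pairB r q (2 * (2 * Nat.find hex)) = n + 1
      · rw [if_pos hv]
        have : n ∈ rangeM (pfst r) := ⟨Nat.find hex, by rw [← hfst]; exact hv⟩
        rw [chi_mem this]
      · rw [if_neg hv]
        obtain h | h := Nat.find_spec hex
        · exact absurd h hv
        · have hsn : n ∈ rangeM (psnd r) := ⟨Nat.find hex, by rw [← hsnd]; exact h⟩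
          have : n ∉ rangeM (pfst r) := fun hfn =>
            Set.eq_empty_iff_forall_notMem.mp hdisj n ⟨hfn, hsn⟩
          rw [chi_not_mem this]
    · have hz : pairB r q (2 * n + 1) = 0 := by
        rw [hdec, hq', chi_not_mem hn]
      simp only [hHdef, hz, if_true]
      have : n ∉ rangeM (pfst r) := fun hfn => hn (by rw [hrange]; exact Or.inl hfn)
      rw [chi_not_mem this]
  · intro n hn hsn
    exact Set.eq_empty_iff_forall_notMem.mp hdisj n ⟨hn, hsn⟩

lemma not_EC1_le_SEP1 : ¬ WRed EC1 SEP1 := by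
  classical
  rintro ⟨Kd, Hd, K, H, hK, hH, hred⟩
  set u : Baire := fun i => i + 2 with hudef
  have hrangeu : rangeM u = {n | 1 ≤ n} := by
    ext n
    constructor
    · rintro ⟨i, hi⟩
      simp only [hudef] at hi
      simp only [Set.mem_setOf_eq]; omega
    · intro hn
      have h1 : 1 ≤ n := hn
      exact ⟨n - 1, by show n - 1 + 2 = n + 1; omega⟩
  have h0u : (0 : ℕ) ∉ rangeM u := by rw [hrangeu]; simp
  have hu : u ∈ EC1.dom := by
    show ((rangeM u)ᶜ).encard ≤ 1
    have : (rangeM u)ᶜ = {0} := by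
      rw [hrangeu]; ext n; simp
    rw [this, Set.encard_singleton]
  obtain ⟨hKdu, hKdom, hsol⟩ := hred u hu
  set S : Set Baire := SEP.sol (K u) with hSdef
  have husec : ∀ s : ↥S, ∃ Ls, ∀ x ∈ Hd, (∀ i < Ls, x i = pairB u s.1 i) → H x 0 = 0 := by
    rintro ⟨s, hs⟩
    have hh := hsol s hs
    obtain ⟨L1, hL1⟩ := exists_use hH hh.1 0
    refine ⟨L1, fun x hx ha => ?_⟩
    rw [hL1 x hx ha]
    have hval : H (pairB u s) = chi (rangeM u) := hh.2
    rw [hval, chi_not_mem h0u]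
  choose L hL using husec
  set P : ℕ → Set ℕ := fun N => {n | ∃ i < N, K u (2 * i) = n + 1} with hPdef
  set Q : ℕ → Set ℕ := fun N => {n | ∃ i < N, K u (2 * i + 1) = n + 1} with hQdef
  set SN : ℕ → Set Baire := fun N =>
    {s | (∀ n, s n ≤ 1) ∧ (∀ n, n ∈ P N → s n = 1) ∧ (∀ n, n ∈ Q N → s n = 0)} with hSNdef
  have hSsub : ∀ N, S ⊆ SN N := by
    rintro N s ⟨A, rfl, hPA, hAQ⟩
    refine ⟨chi_le_one A, ?_, ?_⟩
    · rintro n ⟨i, _, hKi⟩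
      exact chi_mem (hPA ⟨i, hKi⟩)
    · rintro n ⟨i, _, hKi⟩
      exact chi_not_mem fun hnA => (hAQ hnA) ⟨i, hKi⟩
  have hIntS : (⋂ N, SN N) ⊆ S := by
    intro s hs
    simp only [Set.mem_iInter] at hs
    refine ⟨{m | s m = 1}, ?_, ?_, ?_⟩
    · funext n
      by_cases h1 : s n = 1
      · have hc : chi {m | s m = 1} n = 1 := chi_mem (show n ∈ {m | s m = 1} from h1)
        rw [hc]; exact h1
      · have hb := (hs 0).1 n
        have h0 : s n = 0 := by omega
        have hc : chi {m | s m = 1} n = 0 :=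
          chi_not_mem (show n ∉ {m | s m = 1} from h1)
        rw [hc]; exact h0
    · rintro n ⟨i, hKi⟩
      exact (hs (i + 1)).2.1 n ⟨i, Nat.lt_succ_self i, hKi⟩
    · rintro n hn ⟨i, hKi⟩
      have := (hs (i + 1)).2.2 n ⟨i, Nat.lt_succ_self i, hKi⟩
      rw [Set.mem_setOf_eq] at hn
      omega
  have hBin : IsCompact {f : Baire | ∀ n, f n ≤ 1} := by
    have : {f : Baire | ∀ n, f n ≤ 1} = Set.pi Set.univ (fun _ : ℕ => Set.Iic 1) := by
      ext f
      simp only [Set.mem_setOf_eq, Set.mem_pi, Set.mem_univ, true_implies, Set.mem_Iic]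
    rw [this]
    exact isCompact_univ_pi fun n => (Set.finite_Iic 1).isCompact
  have hSNclosed : ∀ N, IsClosed (SN N) := by
    intro N
    have : SN N = (⋂ n, {s : Baire | s n ≤ 1}) ∩
        ((⋂ n, {s : Baire | n ∈ P N → s n = 1}) ∩ (⋂ n, {s : Baire | n ∈ Q N → s n = 0})) := by
      ext s
      simp only [hSNdef, Set.mem_setOf_eq, Set.mem_inter_iff, Set.mem_iInter]
    rw [this]
    refine IsClosed.inter (isClosed_iInter fun n => ?_)
      (IsClosed.inter (isClosed_iInter fun n => ?_) (isClosed_iInter fun n => ?_))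
    · show IsClosed ((fun s : Baire => s n) ⁻¹' Set.Iic 1)
      exact (isClosed_discrete _).preimage (continuous_apply n)
    · by_cases hn : n ∈ P N
      · simp only [hn, true_implies]
        show IsClosed ((fun s : Baire => s n) ⁻¹' {1})
        exact (isClosed_discrete _).preimage (continuous_apply n)
      · simp only [hn, false_implies, Set.setOf_true]
        exact isClosed_univ
    · by_cases hn : n ∈ Q N
      · simp only [hn, true_implies]
        show IsClosed ((fun s : Baire => s n) ⁻¹' {0})
        exact (isClosed_discrete _).preimage (continuous_apply n)
      · simp only [hn, false_implies, Set.setOf_true]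
        exact isClosed_univ
  have hmono : ∀ N, SN (N + 1) ⊆ SN N := by
    rintro N s ⟨a, b, c⟩
    exact ⟨a, fun n ⟨i, hi, hKi⟩ => b n ⟨i, Nat.lt_succ_of_lt hi, hKi⟩,
      fun n ⟨i, hi, hKi⟩ => c n ⟨i, Nat.lt_succ_of_lt hi, hKi⟩⟩
  have hSeq : S = ⋂ N, SN N :=
    subset_antisymm (Set.subset_iInter hSsub) hIntS
  have hScomp : IsCompact S := by
    refine hBin.of_isClosed_subset (by rw [hSeq]; exact isClosed_iInter hSNclosed) ?_
    rw [hSeq]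
    exact fun s hs => ((Set.iInter_subset SN 0) hs).1
  set O : ↥S → Set Baire := fun s => cyl s.1 (L s) with hOdef
  obtain ⟨t, ht⟩ := hScomp.elim_finite_subcover O (fun s => isOpen_cyl _ _)
    (fun s hs => Set.mem_iUnion.mpr ⟨⟨s, hs⟩, self_mem_cyl _ _⟩)
  have hN : ∃ N, SN N ⊆ ⋃ s ∈ t, O s := by
    by_contra hc
    push_neg at hc
    have hne : ∀ N, (SN N \ ⋃ s ∈ t, O s).Nonempty := by
      intro N
      obtain ⟨x, hx1, hx2⟩ := Set.not_subset.mp (hc N)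
      exact ⟨x, hx1, hx2⟩
    have hcl : ∀ N, IsClosed (SN N \ ⋃ s ∈ t, O s) :=
      fun N => (hSNclosed N).sdiff (isOpen_biUnion fun s _ => isOpen_cyl _ _)
    have hcompact0 : IsCompact (SN 0 \ ⋃ s ∈ t, O s) :=
      hBin.of_isClosed_subset (hcl 0) fun x hx => hx.1.1
    obtain ⟨x, hx⟩ := IsCompact.nonempty_iInter_of_sequence_nonempty_isCompact_isClosed
      (fun N => SN N \ ⋃ s ∈ t, O s)
      (fun N => Set.diff_subset_diff_left (hmono N)) hne hcompact0 hcl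
    simp only [Set.mem_iInter, Set.mem_diff] at hx
    have hxS : x ∈ S := hIntS (Set.mem_iInter.mpr fun N => (hx N).1)
    exact (hx 0).2 (ht hxS)
  obtain ⟨N, hSNsub⟩ := hN
  set Lmax := t.sup L with hLmax
  obtain ⟨M₀, hM₀⟩ := exists_use_fin hK hKdu (2 * N)
  set M := max M₀ Lmax with hM
  set u' : Baire := fun i => if i < M then u i else i - M + 1 with hu'def
  have hu'range : rangeM u' = Set.univ := by
    apply Set.eq_univ_of_forall
    intro n
    refine ⟨M + n, ?_⟩
    simp only [hu'def]
    rw [if_neg (by omega)]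
    omega
  have hu'dom : u' ∈ EC1.dom := by
    show ((rangeM u')ᶜ).encard ≤ 1
    rw [hu'range, Set.compl_univ, Set.encard_empty]
    exact zero_le_one
  obtain ⟨hKdu', hKdom', hsol'⟩ := hred u' hu'dom
  have hagreeu : ∀ i < M₀, u' i = u i := fun i hi => if_pos (lt_of_lt_of_le hi (le_max_left _ _))
  have hKagree : ∀ j < 2 * N, K u' j = K u j := hM₀ u' hKdu' hagreeu
  set s' : Baire := chi (rangeM (pfst (K u'))) with hs'def
  have hdisj' : rangeM (pfst (K u')) ∩ rangeM (psnd (K u')) = ∅ := hKdom'.1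
  have hs'sol : s' ∈ SEP.sol (K u') := by
    refine ⟨rangeM (pfst (K u')), rfl, subset_rfl, ?_⟩
    intro n hn hsn
    exact Set.eq_empty_iff_forall_notMem.mp hdisj' n ⟨hn, hsn⟩
  have hs'SN : s' ∈ SN N := by
    refine ⟨chi_le_one _, ?_, ?_⟩
    · rintro n ⟨i, hi, hKi⟩
      refine chi_mem ⟨i, ?_⟩
      show K u' (2 * i) = n + 1
      rw [hKagree (2 * i) (by omega)]
      exact hKi
    · rintro n ⟨i, hi, hKi⟩
      refine chi_not_mem fun hmem => ?_
      have hsnd : n ∈ rangeM (psnd (K u')) := by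
        refine ⟨i, ?_⟩
        show K u' (2 * i + 1) = n + 1
        rw [hKagree (2 * i + 1) (by omega)]
        exact hKi
      exact Set.eq_empty_iff_forall_notMem.mp hdisj' n ⟨hmem, hsnd⟩
  obtain ⟨s₀, hs₀t, hs'O⟩ := Set.mem_iUnion₂.mp (hSNsub hs'SN)
  have hLle : L s₀ ≤ Lmax := Finset.le_sup hs₀t
  obtain ⟨hx'Hd, hx'val⟩ := hsol' s' hs'sol
  have hagree2 : ∀ i < L s₀, pairB u' s' i = pairB u s₀.1 i := by
    refine pairB_agree ?_ ?_
    · intro i hi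
      exact if_pos (by omega)
    · exact hs'O
  have hzero : H (pairB u' s') 0 = 0 := hL s₀ (pairB u' s') hx'Hd hagree2
  have hone : H (pairB u' s') = chi (rangeM u') := hx'val
  rw [hone, hu'range, chi_mem (Set.mem_univ 0)] at hzero
  exact one_ne_zero hzero

lemma not_EC_le_EC1 : ¬ WRed EC EC1 := by
  classical
  rintro ⟨Kd, Hd, K, H, hK, hH, hred⟩
  have hKd : ∀ p : Baire, p ∈ Kd := fun p => (hred p trivial).1
  have hKc : Continuous K := by
    rw [← continuousOn_univ]
    exact hK.mono fun p _ => hKd p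
  have hdom : ∀ p : Baire, ((rangeM (K p))ᶜ).encard ≤ 1 := fun p => (hred p trivial).2.1
  have hHdmem : ∀ p : Baire, pairB p (chi (rangeM (K p))) ∈ Hd := fun p =>
    ((hred p trivial).2.2 _ rfl).1
  have hHval : ∀ p : Baire, H (pairB p (chi (rangeM (K p)))) = chi (rangeM p) := fun p =>
    ((hred p trivial).2.2 _ rfl).2
  set Csp : Set Baire := {p | ∀ k, p k = 0 ∨ p k = 2 * (Nat.unpair k).1 + 1} with hCspdef
  have hodd1 : ∀ p ∈ Csp, (1 : ℕ) ∉ rangeM p := by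
    rintro p hp ⟨k, hk⟩
    rcases hp k with h | h <;> omega
  -- Step A: for every p in Csp, K p does not enumerate everything
  have stepA : ∀ p ∈ Csp, ∃ m, m ∉ rangeM (K p) := by
    intro p hp
    by_contra hall
    push_neg at hall
    obtain ⟨L, hL⟩ := exists_use hH (hHdmem p) 1
    choose wit hwit using hall
    obtain ⟨M, hM⟩ :=
      exists_use_fin hKc.continuousOn (Set.mem_univ p) ((Finset.range L).sup wit + 1)
    set j := max M L with hj
    set p' := Function.update p j 2 with hp'
    have hp'ag : ∀ i < j, p' i = p i := fun i hi =>
      Function.update_of_ne (by omega) _ _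
    have hKp' : ∀ k < L, K p' (wit k) = k + 1 := by
      intro k hk
      have hwk : wit k < (Finset.range L).sup wit + 1 :=
        Nat.lt_succ_of_le (Finset.le_sup (Finset.mem_range.mpr hk))
      have := hM p' (Set.mem_univ _) (fun i hi => hp'ag i (by omega)) (wit k) hwk
      rw [this]
      exact hwit k
    have hq' : ∀ i < L, chi (rangeM (K p')) i = chi (rangeM (K p)) i := by
      intro i hi
      have m1 : i ∈ rangeM (K p') := ⟨wit i, hKp' i hi⟩
      have m2 : i ∈ rangeM (K p) := ⟨wit i, hwit i⟩
      rw [chi_mem m1, chi_mem m2]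
    have hpair : ∀ i < L,
        pairB p' (chi (rangeM (K p'))) i = pairB p (chi (rangeM (K p))) i :=
      pairB_agree (fun i hi => hp'ag i (by omega)) hq'
    have heq := hL _ (hHdmem p') hpair
    rw [hHval p', hHval p] at heq
    have h1p' : (1 : ℕ) ∈ rangeM p' :=
      ⟨j, by rw [hp']; exact Function.update_self _ _ _⟩
    rw [chi_mem h1p', chi_not_mem (hodd1 p hp)] at heq
    exact one_ne_zero heq
  -- Csp is closed, hence Polish, hence a Baire space
  have hCclosed : IsClosed Csp := by
    have : Csp = ⋂ k, (fun p : Baire => p k) ⁻¹' {0, 2 * (Nat.unpair k).1 + 1} := by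
      ext p
      simp only [hCspdef, Set.mem_setOf_eq, Set.mem_iInter, Set.mem_preimage,
        Set.mem_insert_iff, Set.mem_singleton_iff]
    rw [this]
    exact isClosed_iInter fun k => (isClosed_discrete _).preimage (continuous_apply k)
  haveI : CompleteSpace ↥Csp := hCclosed.completeSpace_coe
  haveI : (uniformity ↥Csp).IsCountablyGenerated := by
    rw [uniformity_subtype]
    exact Filter.comap.isCountablyGenerated _ _
  letI : PseudoMetricSpace ↥Csp := UniformSpace.pseudoMetricSpace ↥Csp
  haveI : BaireSpace ↥Csp := BaireSpace.of_completelyPseudoMetrizable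
  haveI : Nonempty ↥Csp := ⟨⟨fun _ => 0, fun _ => Or.inl rfl⟩⟩
  set F : ℕ → Set ↥Csp := fun m => {x : ↥Csp | ∀ i, K x.1 i ≠ m + 1} with hF
  have hFclosed : ∀ m, IsClosed (F m) := by
    intro m
    have : F m = ⋂ i, (fun x : ↥Csp => K x.1 i) ⁻¹' {m + 1}ᶜ := by
      ext x
      simp [hF]
    rw [this]
    exact isClosed_iInter fun i =>
      (isClosed_discrete _).preimage ((continuous_apply i).comp
        (hKc.comp continuous_subtype_val))
  have hFcover : ⋃ m, F m = Set.univ := by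
    apply Set.eq_univ_of_forall
    intro x
    obtain ⟨m, hm⟩ := stepA x.1 x.2
    exact Set.mem_iUnion.mpr ⟨m, fun i hi => hm ⟨i, hi⟩⟩
  obtain ⟨m, x₀, hx₀⟩ := nonempty_interior_of_iUnion_of_closed hFclosed hFcover
  obtain ⟨U, hUo, hUeq⟩ := isOpen_induced_iff.mp (isOpen_interior (s := F m))
  have hx₀U : x₀.1 ∈ U := by
    have : x₀ ∈ Subtype.val ⁻¹' U := hUeq ▸ hx₀
    exact this
  obtain ⟨L₀, hL₀⟩ := exists_cyl_subset hUo hx₀U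
  have hcylsub : ∀ p, (hp : p ∈ Csp) → p ∈ cyl x₀.1 L₀ → ∀ i, K p i ≠ m + 1 := by
    intro p hp hcy
    have hmem : (⟨p, hp⟩ : ↥Csp) ∈ Subtype.val ⁻¹' U := hL₀ hcy
    rw [hUeq] at hmem
    exact interior_subset hmem
  have hrangeKp : ∀ p, (hp : p ∈ Csp) → p ∈ cyl x₀.1 L₀ → rangeM (K p) = {m}ᶜ := by
    intro p hp hcy
    have hm : m ∉ rangeM (K p) := fun hc => by
      obtain ⟨i, hi⟩ := hc
      exact hcylsub p hp hcy i hi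
    have h1 : (rangeM (K p))ᶜ = {m} := by
      apply subset_antisymm
      · intro b hb
        have hbm : b = m := Set.encard_le_one_iff.mp (hdom p) b m hb hm
        exact hbm ▸ rfl
      · intro b hb
        rw [Set.mem_singleton_iff] at hb
        subst hb
        exact hm
    rw [← compl_compl (rangeM (K p)), h1]
  set pstar : Baire := fun k => if k < L₀ then x₀.1 k else 0 with hpstar
  have hpstarC : pstar ∈ Csp := by
    intro k
    by_cases h : k < L₀
    · simpa [hpstar, h] using x₀.2 k
    · simp [hpstar, h]
  have hpstarcyl : pstar ∈ cyl x₀.1 L₀ := fun i hi => by simp [hpstar, hi]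
  set a : ℕ := (Finset.range L₀).sup (fun k => (Nat.unpair k).1) + 1 with ha
  have hfresh : 2 * a ∉ rangeM pstar := by
    rintro ⟨k, hk⟩
    by_cases h : k < L₀
    · rw [hpstar] at hk
      simp only [if_pos h] at hk
      rcases x₀.2 k with h2 | h2
      · omega
      · rw [h2] at hk
        have hle : (Nat.unpair k).1 ≤ (Finset.range L₀).sup (fun k => (Nat.unpair k).1) :=
          Finset.le_sup (f := fun k => (Nat.unpair k).1) (Finset.mem_range.mpr h)
        omega
    · rw [hpstar] at hk
      simp only [if_neg h] at hk
      omega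
  obtain ⟨L, hL⟩ := exists_use hH (hHdmem pstar) (2 * a)
  set j := Nat.pair a (max L L₀) with hj
  have hjge : max L L₀ ≤ j := Nat.right_le_pair _ _
  have hja : (Nat.unpair j).1 = a := by rw [hj, Nat.unpair_pair]
  set p' := Function.update pstar j (2 * a + 1) with hp'
  have hp'C : p' ∈ Csp := by
    intro k
    by_cases h : k = j
    · subst h
      right
      rw [hp', Function.update_self, hja]
    · rw [hp', Function.update_of_ne h]
      exact hpstarC k
  have hp'cyl : p' ∈ cyl x₀.1 L₀ := by
    intro i hi
    rw [hp', Function.update_of_ne (by omega : i ≠ j)]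
    exact hpstarcyl i hi
  have hq1 : rangeM (K pstar) = {m}ᶜ := hrangeKp pstar hpstarC hpstarcyl
  have hq2 : rangeM (K p') = {m}ᶜ := hrangeKp p' hp'C hp'cyl
  have hpair : ∀ i < L,
      pairB p' (chi (rangeM (K p'))) i = pairB pstar (chi (rangeM (K pstar))) i := by
    refine pairB_agree ?_ ?_
    · intro i hi
      rw [hp', Function.update_of_ne (by omega : i ≠ j)]
    · intro i _
      rw [hq1, hq2]
  have heq := hL _ (hHdmem p') hpair
  rw [hHval p', hHval pstar] at heq
  have h2a : 2 * a ∈ rangeM p' :=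
    ⟨j, by rw [hp']; rw [Function.update_self]⟩
  rw [chi_mem h2a, chi_not_mem hfresh] at heq
  exact one_ne_zero heq

end MainLemmas

/-- `SEP₁ <_W EC₁ <_W EC`. -/
theorem SEP1_lt_EC1_lt_EC : WLt SEP1 EC1 ∧ WLt EC1 EC := by
  exact ⟨⟨red_SEP1_EC1, not_EC1_le_SEP1⟩, ⟨red_EC1_EC, not_EC_le_EC1⟩⟩
end

section
/- WKL ≡_W C_{2^ℕ}: weak Kőnig's lemma is continuously Weihrauch equivalent to closed choice on Cantor space. -/
open Filter Topology

-- auxiliary development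
lemma psnd_pairB (p q : Baire) : psnd (pairB p q) = q := by
  funext n
  simp only [psnd, pairB]
  have h1 : (2*n+1) % 2 = 1 := by omega
  have h2 : (2*n+1) / 2 = n := by omega
  simp [h1, h2]

lemma psnd_continuous : Continuous psnd :=
  continuous_pi fun n => continuous_apply (2 * n + 1)

lemma cont_of_finite_dep {F : Baire → Baire}
    (h : ∀ n, ∃ m, ∀ p q : Baire, (∀ i < m, p i = q i) → F p n = F q n) :
    Continuous F := by
  refine continuous_pi fun n => ?_
  obtain ⟨m, hm⟩ := h n
  have key : (fun p => F p n) =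
      (fun v : Fin m → ℕ => F (fun i => if h : i < m then v ⟨i, h⟩ else 0) n) ∘
        (fun p (i : Fin m) => p i) := by
    funext p
    exact hm p _ (fun i hi => by simp [hi])
  rw [key]
  exact continuous_of_discreteTopology.comp (continuous_pi fun i => continuous_apply _)

def decodeWord : ℕ → List Bool
  | 0 => []
  | n+1 => decide (n % 2 = 1) :: decodeWord (n / 2)
decreasing_by have := Nat.div_le_self n 2; omega

lemma decodeWord_succ (n : ℕ) :
    decodeWord (n+1) = decide (n % 2 = 1) :: decodeWord (n / 2) := by
  rw [decodeWord]

lemma decode_wordCode (w : List Bool) : decodeWord (wordCode w) = w := by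
  induction w with
  | nil =>
    show decodeWord 0 = []
    rw [decodeWord]
  | cons b w ih =>
    cases b
    · have h : wordCode (false :: w) = 2 * wordCode w + 1 := by simp [wordCode]
      have h1 : ¬ ((2 * wordCode w) % 2 = 1) := by omega
      have h2 : 2 * wordCode w / 2 = wordCode w := by omega
      rw [h, decodeWord_succ, h2, ih]
      simp [h1]
    · have h : wordCode (true :: w) = (2 * wordCode w + 1) + 1 := by simp [wordCode]
      have h1 : (2 * wordCode w + 1) % 2 = 1 := by omega
      have h2 : (2 * wordCode w + 1) / 2 = wordCode w := by omega
      rw [h, decodeWord_succ, h2, ih]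
      simp [h1]

lemma prefixList_length (x : Baire) (k : ℕ) : (prefixList x k).length = k := by
  simp [prefixList]

lemma prefixList_succ (x : Baire) (k : ℕ) :
    prefixList x (k+1) = prefixList x k ++ [decide (x k = 1)] := by
  simp [prefixList, List.range_succ]

lemma prefixList_take (x : Baire) {j k : ℕ} (h : j ≤ k) :
    (prefixList x k).take j = prefixList x j := by
  simp [prefixList, ← List.map_take, List.take_range, Nat.min_eq_left h]

lemma prefixList_mono (x : Baire) {j k : ℕ} (h : j ≤ k) :
    prefixList x j <+: prefixList x k := by
  rw [List.prefix_iff_eq_take, prefixList_length, prefixList_take x h]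

lemma eq_prefixList_of_prefix {x : Baire} {v : List Bool} {k : ℕ}
    (h : v <+: prefixList x k) : v = prefixList x v.length := by
  have hl : v.length ≤ k := by
    have := h.length_le
    simpa [prefixList_length] using this
  calc v = (prefixList x k).take v.length := List.prefix_iff_eq_take.mp h
    _ = prefixList x v.length := prefixList_take x hl

-- König's lemma construction
def extSet (t : Baire) (w : List Bool) : Set (List Bool) :=
  {v | t (wordCode v) = 1 ∧ w <+: v}

open Classical in
noncomputable def pathAux (t : Baire) : ℕ → List Bool
  | 0 => []
  | k+1 => pathAux t k ++ [decide (extSet t (pathAux t k ++ [true])).Infinite]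

lemma extSet_subset (t : Baire) (w : List Bool) :
    extSet t w ⊆ {w} ∪ (extSet t (w ++ [true]) ∪ extSet t (w ++ [false])) := by
  rintro v ⟨hv1, r, hr⟩
  cases r with
  | nil => left; simp [← hr]
  | cons c r =>
    right
    cases c
    · right; exact ⟨hv1, r, by simp [← hr]⟩
    · left; exact ⟨hv1, r, by simp [← hr]⟩

lemma extSet_infinite {t : Baire} (hI : {w : List Bool | t (wordCode w) = 1}.Infinite)
    (k : ℕ) : (extSet t (pathAux t k)).Infinite := by
  induction k with
  | zero =>
    have : {w : List Bool | t (wordCode w) = 1} ⊆ extSet t (pathAux t 0) := by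
      intro v hv; exact ⟨hv, by simp [pathAux]⟩
    exact hI.mono this
  | succ k ih =>
    have hone : (extSet t (pathAux t k ++ [true])).Infinite ∨
        (extSet t (pathAux t k ++ [false])).Infinite := by
      by_contra hc
      push_neg at hc
      exact ih (((Set.finite_singleton _).union (hc.1.union hc.2)).subset
        (extSet_subset t _))
    by_cases h : (extSet t (pathAux t k ++ [true])).Infinite
    · simp only [pathAux]; simpa [h] using h
    · have := hone.resolve_left h
      simpa [pathAux, h] using this

open Classical in
noncomputable def pathX (t : Baire) : Baire := fun k =>
  if (extSet t (pathAux t k ++ [true])).Infinite then 1 else 0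

lemma prefixList_pathX (t : Baire) (k : ℕ) : prefixList (pathX t) k = pathAux t k := by
  induction k with
  | zero => simp [prefixList, pathAux]
  | succ k ih =>
    rw [prefixList_succ, ih]
    by_cases h : (extSet t (pathAux t k ++ [true])).Infinite <;>
      simp [pathX, pathAux, h]

lemma pathX_le (t : Baire) (n : ℕ) : pathX t n ≤ 1 := by
  unfold pathX; split <;> omega

lemma pathX_mem {t : Baire} (ht : isTreeCode t)
    (hI : {w : List Bool | t (wordCode w) = 1}.Infinite) (k : ℕ) :
    t (wordCode (prefixList (pathX t) k)) = 1 := by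
  rw [prefixList_pathX]
  obtain ⟨v, hv1, hv2⟩ := (extSet_infinite hI k).nonempty
  exact ht.2 _ v hv2 hv1

-- reduction maps
def K1 (t : Baire) : Baire := fun i => if t i = 1 then 0 else i + 1

lemma K1_continuous : Continuous K1 :=
  cont_of_finite_dep fun n => ⟨n + 1, fun p q h => by
    have := h n (by omega)
    simp [K1, this]⟩

lemma notmem_rangeM_K1 (t : Baire) (n : ℕ) : n ∉ rangeM (K1 t) ↔ t n = 1 := by
  constructor
  · intro h
    by_contra hne
    exact h ⟨n, by simp [K1, hne]⟩
  · rintro h ⟨i, hi⟩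
    unfold K1 at hi
    split at hi
    · omega
    · have : i = n := by omega
      subst this
      simp_all

lemma mem_Ap_K1 (t x : Baire) : x ∈ Ap (K1 t) ↔ x ∈ WKL.sol t := by
  show ((∀ n, x n ≤ 1) ∧ _) ↔ ((∀ n, x n ≤ 1) ∧ _)
  refine and_congr_right fun _ => ?_
  exact forall_congr' fun k => notmem_rangeM_K1 t _

open Classical in
noncomputable def K2 (p : Baire) : Baire := fun n =>
  if ∀ v, v <+: decodeWord n → ∀ i < (decodeWord n).length, p i ≠ wordCode v + 1
    then 1 else 0

open Classical in
lemma K2_continuous : Continuous K2 :=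
  cont_of_finite_dep fun n => ⟨(decodeWord n).length, fun p q h => by
    unfold K2
    by_cases H : ∀ v, v <+: decodeWord n → ∀ i < (decodeWord n).length,
        p i ≠ wordCode v + 1
    · rw [if_pos H, if_pos (fun v hv i hi => by rw [← h i hi]; exact H v hv i hi)]
    · rw [if_neg H, if_neg (fun H' => H (fun v hv i hi => by
        rw [h i hi]; exact H' v hv i hi))]⟩

lemma K2_eq_one (p : Baire) (w : List Bool) :
    K2 p (wordCode w) = 1 ↔ ∀ v, v <+: w → ∀ i < w.length, p i ≠ wordCode v + 1 := by
  unfold K2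
  rw [decode_wordCode]
  split <;> simp_all

lemma K2_tree (p : Baire) : isTreeCode (K2 p) := by
  constructor
  · intro n; unfold K2; split <;> omega
  · intro w v hwv hv
    rw [K2_eq_one] at hv ⊢
    intro u hu i hi
    exact hv u (hu.trans hwv) i (lt_of_lt_of_le hi hwv.length_le)

lemma K2_infinite {p : Baire} (hp : (Ap p).Nonempty) :
    {w : List Bool | K2 p (wordCode w) = 1}.Infinite := by
  obtain ⟨x, hx1, hx2⟩ := hp
  apply Set.infinite_of_injective_forall_mem (f := fun k => prefixList x k)
  · intro a b hab
    have := congrArg List.length hab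
    simpa [prefixList_length] using this
  · intro k
    rw [Set.mem_setOf_eq, K2_eq_one]
    intro v hv i _ hcon
    have hv' : v = prefixList x v.length := eq_prefixList_of_prefix hv
    exact hx2 v.length ⟨i, by rw [← hv']; exact hcon⟩

lemma sol_K2_sub {p q : Baire} (hq : q ∈ WKL.sol (K2 p)) : q ∈ Ap p := by
  obtain ⟨h1, h2⟩ := hq
  refine ⟨h1, fun k hmem => ?_⟩
  obtain ⟨i, hi⟩ := hmem
  have h3 := h2 (max (k+1) (i+1))
  rw [K2_eq_one] at h3
  exact h3 (prefixList q k) (prefixList_mono q (by omega))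
    i (by rw [prefixList_length]; omega) hi

/-- `WKL ≡_W C_{2^ℕ}`. -/
theorem WKL_equiv_CCantor : WEquiv WKL CCantor := by
  constructor
  · refine ⟨Set.univ, Set.univ, K1, psnd, K1_continuous.continuousOn,
      psnd_continuous.continuousOn, ?_⟩
    rintro t ⟨ht, hI⟩
    refine ⟨trivial, ?_, ?_⟩
    · exact ⟨pathX t, (mem_Ap_K1 t _).mpr ⟨pathX_le t, pathX_mem ht hI⟩⟩
    · intro q hq
      exact ⟨trivial, by rw [psnd_pairB]; exact (mem_Ap_K1 t q).mp hq⟩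
  · refine ⟨Set.univ, Set.univ, K2, psnd, K2_continuous.continuousOn,
      psnd_continuous.continuousOn, ?_⟩
    intro p hp
    refine ⟨trivial, ⟨K2_tree p, K2_infinite hp⟩, ?_⟩
    intro q hq
    exact ⟨trivial, by rw [psnd_pairB]; exact sol_K2_sub hq⟩
end

section
/- For all n ≥ 1: LLPO_{n+2} <_W LLPO_{n+1} <_W LPO, i.e., LLPO_{n+2} is strictly continuously Weihrauch below LLPO_{n+1}, which in turn is strictly continuously Weihrauch below LPO. -/
open Filter Topology

/-! ### Auxiliary lemmas for `LLPOn_strict` -/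

section LLPOAux

lemma cylinder_mem {a : Baire} {U : Set Baire} (hU : U ∈ nhds a) :
    ∃ N, ∀ x : Baire, (∀ k < N, x k = a k) → x ∈ U := by
  rw [nhds_pi] at hU
  rcases Filter.mem_pi.mp hU with ⟨I, hIfin, t, ht, hsub⟩
  rcases hIfin.bddAbove with ⟨N, hN⟩
  refine ⟨N + 1, fun x hx => hsub fun i hi => ?_⟩
  have hiN : i < N + 1 := Nat.lt_succ_of_le (hN hi)
  rw [hx i hiN]
  exact mem_of_mem_nhds (ht i)

lemma coord_stable {F : Baire → Baire} {D : Set Baire} (hF : ContinuousOn F D)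
    {a : Baire} (ha : a ∈ D) (c : ℕ) :
    ∃ N, ∀ x ∈ D, (∀ k < N, x k = a k) → F x c = F a c := by
  have hcont : ContinuousWithinAt F D a := hF a ha
  have hopen : IsOpen ((fun y : Baire => y c) ⁻¹' {F a c}) :=
    (continuous_apply c).isOpen_preimage _ (isOpen_discrete _)
  have hmem : (fun y : Baire => y c) ⁻¹' {F a c} ∈ nhds (F a) :=
    hopen.mem_nhds rfl
  have hpre := Filter.mem_map.mp (hcont hmem)
  rw [mem_nhdsWithin] at hpre
  obtain ⟨u, huo, hau, hsub⟩ := hpre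
  obtain ⟨N, hN⟩ := cylinder_mem (huo.mem_nhds hau)
  exact ⟨N, fun x hxD hxa => hsub ⟨hN x hxa, hxD⟩⟩

lemma idx_eq {m a b u v : ℕ} (ha : a < m) (hb : b < m)
    (h : m * u + a = m * v + b) : a = b ∧ u = v := by
  have h1 : (m * u + a) % m = a := by
    rw [Nat.add_comm, Nat.add_mul_mod_self_left, Nat.mod_eq_of_lt ha]
  have h2 : (m * v + b) % m = b := by
    rw [Nat.add_comm, Nat.add_mul_mod_self_left, Nat.mod_eq_of_lt hb]
  have hab : a = b := by rw [← h1, ← h2, h]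
  refine ⟨hab, ?_⟩
  have hmu : m * u = m * v := by omega
  exact Nat.eq_of_mul_eq_mul_left (by omega) hmu

/-- The perturbation of the zero sequence whose `i`-th component (out of `m`)
has a single `1` at position `N`. -/
def pertB (m i N : ℕ) : Baire := fun j => if j = m * N + (i - 1) then 1 else 0

lemma pertB_small {m i N k : ℕ} (hm : 1 ≤ m) (hk : k < N) : pertB m i N k = 0 := by
  have hN : N ≤ m * N := Nat.le_mul_of_pos_left N hm
  simp only [pertB]
  rw [if_neg (by omega)]

lemma projFin_pertB_self {m i N : ℕ} (h1 : 1 ≤ i) :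
    projFin m i (pertB m i N) N = 1 := by
  simp only [projFin, pertB]
  rw [if_pos (by omega)]

lemma projFin_pertB_ne {m i i' N : ℕ} (h1 : 1 ≤ i') (h2 : i' ≤ m)
    (h1' : 1 ≤ i) (h2' : i ≤ m) (hne : i' ≠ i) : isZeroSeq (projFin m i' (pertB m i N)) := by
  intro k
  simp only [projFin, pertB]
  rw [if_neg]
  intro hEq
  have hEq' : m * k + (i' - 1) = m * N + (i - 1) := by omega
  have := (idx_eq (by omega) (by omega) hEq').1
  omega

lemma pertB_mem_dom {m i N : ℕ} (h1 : 1 ≤ i) (h2 : i ≤ m) :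
    pertB m i N ∈ (LLPOn m).dom := by
  refine Set.encard_le_one_iff.mpr ?_
  rintro a b ⟨ha1, ham, hanz⟩ ⟨hb1, hbm, hbnz⟩
  have ha : a = i := by
    by_contra h; exact hanz (projFin_pertB_ne ha1 ham h1 h2 h)
  have hb : b = i := by
    by_contra h; exact hbnz (projFin_pertB_ne hb1 hbm h1 h2 h)
  omega

lemma constSeq_zero_mem_dom (m : ℕ) : constSeq 0 ∈ (LLPOn m).dom := by
  refine Set.encard_le_one_iff.mpr ?_
  rintro a b ⟨-, -, hanz⟩ -
  exact absurd (fun k => rfl) hanz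

lemma dom_subsing {m : ℕ} {r : Baire} (h : r ∈ (LLPOn m).dom) :
    ∀ a, 1 ≤ a → a ≤ m → ¬ isZeroSeq (projFin m a r) →
    ∀ b, 1 ≤ b → b ≤ m → ¬ isZeroSeq (projFin m b r) → a = b := by
  intro a ha1 ham hanz b hb1 hbm hbnz
  exact Set.encard_le_one_iff.mp h a b ⟨ha1, ham, hanz⟩ ⟨hb1, hbm, hbnz⟩

/-- The general non-reducibility lemma: a problem that is total enough,
whose solutions at `0̂` read values in `[1, M-1]` at position `0`, and such that
suitable perturbations of `0̂` exclude the former value, is not reducible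
to `LLPOn M`. -/
lemma neg_general (f : Problem) (M : ℕ) (hM : 2 ≤ M) (P : ℕ → ℕ → Baire)
    (hP0 : ∀ i L k, 1 ≤ i → i ≤ M - 1 → k < L → P i L k = 0)
    (hPdom : ∀ i L, 1 ≤ i → i ≤ M - 1 → P i L ∈ f.dom)
    (hz : constSeq 0 ∈ f.dom)
    (hval : ∀ s ∈ f.sol (constSeq 0), s 0 ∈ Finset.Icc 1 (M - 1))
    (hexcl : ∀ L, ∀ s ∈ f.sol (constSeq 0), ∀ t ∈ f.sol (P (s 0) L), t 0 ≠ s 0) :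
    ¬ WRed f (LLPOn M) := by
  rintro ⟨Kd, Hd, K, H, hKc, hHc, hred⟩
  obtain ⟨hzKd, hzdom, hzsol⟩ := hred (constSeq 0) hz
  set h : ℕ → ℕ := fun j => H (pairB (constSeq 0) (constSeq j)) 0 with hhdef
  have hJ : ∀ j, 1 ≤ j → j ≤ M → isZeroSeq (projFin M j (K (constSeq 0))) →
      pairB (constSeq 0) (constSeq j) ∈ Hd ∧
        H (pairB (constSeq 0) (constSeq j)) ∈ f.sol (constSeq 0) := by
    intro j hj1 hjM hjz
    exact hzsol (constSeq j) ⟨j, hj1, hjM, hjz, rfl⟩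
  have hhval : ∀ j, 1 ≤ j → j ≤ M → isZeroSeq (projFin M j (K (constSeq 0))) →
      1 ≤ h j ∧ h j ≤ M - 1 := by
    intro j hj1 hjM hjz
    have := hval _ (hJ j hj1 hjM hjz).2
    rw [Finset.mem_Icc] at this
    exact this
  have key : ∀ j, 1 ≤ j → j ≤ M → isZeroSeq (projFin M j (K (constSeq 0))) →
      ∃ Nj, ∀ L, Nj ≤ L → ¬ isZeroSeq (projFin M j (K (P (h j) L))) := by
    intro j hj1 hjM hjz
    obtain ⟨hmemHd, hsol⟩ := hJ j hj1 hjM hjz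
    obtain ⟨N0, hN0⟩ := coord_stable hHc hmemHd 0
    obtain ⟨hhj1, hhj2⟩ := hhval j hj1 hjM hjz
    refine ⟨N0, fun L hL hzero => ?_⟩
    obtain ⟨hpKd, hpdom, hpsol⟩ := hred (P (h j) L) (hPdom _ L hhj1 hhj2)
    obtain ⟨hmem', ht⟩ := hpsol (constSeq j) ⟨j, hj1, hjM, hzero, rfl⟩
    have hagree : ∀ k < N0,
        pairB (P (h j) L) (constSeq j) k = pairB (constSeq 0) (constSeq j) k := by
      intro k hk
      simp only [pairB]
      rcases Nat.mod_two_eq_zero_or_one k with h2 | h2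
      · rw [if_pos h2, if_pos h2]
        rw [hP0 _ _ _ hhj1 hhj2 (show k / 2 < L by omega)]
        rfl
      · rw [if_neg (by omega), if_neg (by omega)]
    have hv := hN0 _ hmem' hagree
    exact hexcl L _ hsol _ ht hv
  have hinj : ∀ j₁ j₂, 1 ≤ j₁ → j₁ ≤ M → isZeroSeq (projFin M j₁ (K (constSeq 0))) →
      1 ≤ j₂ → j₂ ≤ M → isZeroSeq (projFin M j₂ (K (constSeq 0))) →
      h j₁ = h j₂ → j₁ = j₂ := by
    intro j₁ j₂ h11 h1M h1z h21 h2M h2z hhh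
    obtain ⟨N₁, hN₁⟩ := key j₁ h11 h1M h1z
    obtain ⟨N₂, hN₂⟩ := key j₂ h21 h2M h2z
    have k1 := hN₁ (max N₁ N₂) (le_max_left _ _)
    have k2 := hN₂ (max N₁ N₂) (le_max_right _ _)
    rw [hhh] at k1
    obtain ⟨hhj1, hhj2⟩ := hhval j₂ h21 h2M h2z
    have hdom' := (hred (P (h j₂) (max N₁ N₂)) (hPdom _ _ hhj1 hhj2)).2.1
    exact dom_subsing hdom' j₁ h11 h1M k1 j₂ h21 h2M k2
  by_cases hC : ∃ j₀, 1 ≤ j₀ ∧ j₀ ≤ M ∧ ¬ isZeroSeq (projFin M j₀ (K (constSeq 0)))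
  · obtain ⟨j₀, hj01, hj0M, hj0nz⟩ := hC
    obtain ⟨k₀, hk₀⟩ : ∃ k, projFin M j₀ (K (constSeq 0)) k ≠ 0 := by
      by_contra hh
      push_neg at hh
      exact hj0nz fun k => hh k
    obtain ⟨Mc, hMc⟩ := coord_stable hKc hzKd (M * k₀ + j₀ - 1)
    obtain ⟨j, hj1, hjM, hjne, hjz⟩ :
        ∃ j, 1 ≤ j ∧ j ≤ M ∧ j ≠ j₀ ∧ isZeroSeq (projFin M j (K (constSeq 0))) := by
      rcases Classical.em (isZeroSeq (projFin M 1 (K (constSeq 0)))) with h1 | h1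
      · rcases Classical.em (j₀ = 1) with e | e
        · refine ⟨2, by omega, hM, by omega, ?_⟩
          by_contra h2
          have := dom_subsing hzdom 2 (by omega) hM h2 j₀ hj01 hj0M hj0nz
          omega
        · exact ⟨1, le_refl 1, by omega, fun hh => e hh.symm, h1⟩
      · have e1 : 1 = j₀ := dom_subsing hzdom 1 (by omega) (by omega) h1 j₀ hj01 hj0M hj0nz
        refine ⟨2, by omega, hM, by omega, ?_⟩
        by_contra h2
        have := dom_subsing hzdom 2 (by omega) hM h2 j₀ hj01 hj0M hj0nz
        omega
    obtain ⟨Nj, hNj⟩ := key j hj1 hjM hjz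
    obtain ⟨hhj1, hhj2⟩ := hhval j hj1 hjM hjz
    obtain ⟨hpKd, hpdom, -⟩ := hred (P (h j) (max Nj Mc)) (hPdom _ _ hhj1 hhj2)
    have hagree : ∀ k < Mc, P (h j) (max Nj Mc) k = constSeq 0 k := by
      intro k hk
      rw [hP0 _ _ _ hhj1 hhj2 (by omega : k < max Nj Mc)]
      rfl
    have hcoord := hMc _ hpKd hagree
    have hj0nz' : ¬ isZeroSeq (projFin M j₀ (K (P (h j) (max Nj Mc)))) := by
      intro hzz
      have hzk : K (P (h j) (max Nj Mc)) (M * k₀ + j₀ - 1) = 0 := hzz k₀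
      rw [hcoord] at hzk
      exact hk₀ hzk
    have hjnz' := hNj (max Nj Mc) (le_max_left _ _)
    exact hjne (dom_subsing hpdom j hj1 hjM hjnz' j₀ hj01 hj0M hj0nz')
  · push_neg at hC
    have hmaps : ∀ a ∈ Finset.Icc 1 M, h a ∈ Finset.Icc 1 (M - 1) := by
      intro a ha
      rw [Finset.mem_Icc] at ha
      rw [Finset.mem_Icc]
      exact hhval a ha.1 ha.2 (hC a ha.1 ha.2)
    have hinj' : Set.InjOn h (Finset.Icc 1 M) := by
      intro a ha b hb hab
      simp only [Finset.coe_Icc, Set.mem_Icc] at ha hb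
      exact hinj a b ha.1 ha.2 (hC a ha.1 ha.2) hb.1 hb.2 (hC b hb.1 hb.2) hab
    have hcard := Finset.card_le_card_of_injOn h hmaps hinj'
    rw [Nat.card_Icc, Nat.card_Icc] at hcard
    omega

lemma neg_LLPO {m : ℕ} (hm : 2 ≤ m) : ¬ WRed (LLPOn m) (LLPOn (m + 1)) := by
  refine neg_general (LLPOn m) (m + 1) (by omega) (pertB m) ?_ ?_ ?_ ?_ ?_
  · intro i L k h1 h2 hk
    exact pertB_small (by omega) hk
  · intro i L h1 h2
    exact pertB_mem_dom h1 (by omega)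
  · exact constSeq_zero_mem_dom m
  · rintro s ⟨i, h1, h2, -, rfl⟩
    refine Finset.mem_Icc.mpr ⟨h1, ?_⟩
    show i ≤ m + 1 - 1
    omega
  · rintro L s ⟨i, hi1, him, -, rfl⟩ t ⟨i', hi'1, hi'm, hz', rfl⟩
    have e0 : constSeq i 0 = i := rfl
    rw [e0] at hz'
    show i' ≠ i
    intro e
    subst e
    have hone := hz' L
    rw [projFin_pertB_self hi'1] at hone
    exact one_ne_zero hone

lemma projFin_one (r : Baire) : projFin 1 1 r = r := by
  funext k
  simp only [projFin]
  congr 1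
  omega

lemma LPO1_sol_zero {r : Baire} (h : isZeroSeq r) :
    (LPOn 1).sol r = {constSeq 1} := by
  have hset : {i | 1 ≤ i ∧ i ≤ 1 ∧ isZeroSeq (projFin 1 i r)} = {1} := by
    ext i
    simp only [Set.mem_setOf_eq, Set.mem_singleton_iff]
    constructor
    · rintro ⟨h1, h2, -⟩; omega
    · rintro rfl
      exact ⟨le_refl 1, le_refl 1, by rw [projFin_one]; exact h⟩
  simp only [LPOn, hset, Set.ncard_singleton]

lemma LPO1_sol_nonzero {r : Baire} (h : ¬ isZeroSeq r) :
    (LPOn 1).sol r = {constSeq 0} := by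
  have hset : {i | 1 ≤ i ∧ i ≤ 1 ∧ isZeroSeq (projFin 1 i r)} = ∅ := by
    ext i
    simp only [Set.mem_setOf_eq, Set.mem_empty_iff_false, iff_false, not_and]
    intro h1 h2 hzz
    have : i = 1 := by omega
    subst this
    rw [projFin_one] at hzz
    exact h hzz
  simp only [LPOn, hset, Set.ncard_empty]

lemma neg_LPO {m : ℕ} (hm : 2 ≤ m) : ¬ WRed (LPOn 1) (LLPOn m) := by
  refine neg_general (LPOn 1) m hm (fun _ L => pertB 1 1 L) ?_ ?_ ?_ ?_ ?_
  · intro i L k h1 h2 hk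
    exact pertB_small (le_refl 1) hk
  · intro i L h1 h2
    exact Set.mem_univ _
  · exact Set.mem_univ _
  · intro s hs
    rw [LPO1_sol_zero (fun _ => rfl : isZeroSeq (constSeq 0)), Set.mem_singleton_iff] at hs
    rw [hs]
    refine Finset.mem_Icc.mpr ⟨le_refl 1, ?_⟩
    show 1 ≤ m - 1
    omega
  · intro L s hs t ht
    rw [LPO1_sol_zero (fun _ => rfl : isZeroSeq (constSeq 0)), Set.mem_singleton_iff] at hs
    have hnz : ¬ isZeroSeq (pertB 1 1 L) := by
      intro hzz
      have hzl := hzz L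
      simp only [pertB] at hzl
      rw [if_pos (by omega)] at hzl
      exact one_ne_zero hzl
    have ht' : t ∈ (LPOn 1).sol (pertB 1 1 L) := ht
    rw [LPO1_sol_nonzero hnz, Set.mem_singleton_iff] at ht'
    rw [hs, ht']
    exact Nat.zero_ne_one

lemma pos_LLPO_LPO {m : ℕ} (hm : 2 ≤ m) : WRed (LLPOn m) (LPOn 1) := by
  refine ⟨Set.univ, Set.univ, (fun p k => p (m * k)),
    (fun x => if x 1 = 1 then constSeq 1 else constSeq 2), ?_, ?_, ?_⟩
  · exact (continuous_pi fun k => continuous_apply (m * k)).continuousOn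
  · refine Continuous.continuousOn ?_
    exact (continuous_of_discreteTopology
      (f := fun v : ℕ => if v = 1 then constSeq 1 else constSeq 2)).comp
      (continuous_apply 1)
  · intro p hp
    refine ⟨trivial, trivial, ?_⟩
    intro q hq
    refine ⟨trivial, ?_⟩
    have hK1 : (fun k => p (m * k)) = projFin m 1 p := by
      funext k
      have he : m * k + 1 - 1 = m * k := by omega
      simp only [projFin, he]
    have hq' : q ∈ (LPOn 1).sol (projFin m 1 p) := by
      rw [← hK1]; exact hq
    have hq1 : pairB p q 1 = q 0 := by simp [pairB]
    show (if pairB p q 1 = 1 then constSeq 1 else constSeq 2) ∈ (LLPOn m).sol p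
    by_cases hzp : isZeroSeq (projFin m 1 p)
    · rw [LPO1_sol_zero hzp, Set.mem_singleton_iff] at hq'
      rw [hq1, hq', if_pos (show constSeq 1 0 = 1 from rfl)]
      exact ⟨1, le_refl 1, by omega, hzp, rfl⟩
    · rw [LPO1_sol_nonzero hzp, Set.mem_singleton_iff] at hq'
      rw [hq1, hq', if_neg (show ¬ constSeq 0 0 = 1 from Nat.zero_ne_one)]
      have hz2 : isZeroSeq (projFin m 2 p) := by
        by_contra h2
        have := dom_subsing hp 1 (le_refl 1) (by omega) hzp 2 (by omega) hm h2
        omega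
      exact ⟨2, by omega, hm, hz2, rfl⟩

/-- The merge map used to reduce `LLPOn (m+1)` to `LLPOn m`. -/
def mergeK (m : ℕ) (p : Baire) : Baire := fun j =>
  if j % m = m - 1 then p ((m + 1) * (j / m) + (m - 1)) + p ((m + 1) * (j / m) + m)
  else p ((m + 1) * (j / m) + j % m)

lemma mergeK_proj {m : ℕ} (hm : 1 ≤ m) (p : Baire) {i : ℕ}
    (h1 : 1 ≤ i) (h2 : i ≤ m) (k : ℕ) :
    projFin m i (mergeK m p) k =
      if i = m then projFin (m + 1) m p k + projFin (m + 1) (m + 1) p k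
      else projFin (m + 1) i p k := by
  have hidx : m * k + i - 1 = m * k + (i - 1) := by omega
  have hmod : (m * k + (i - 1)) % m = i - 1 := by
    rw [Nat.add_comm, Nat.add_mul_mod_self_left, Nat.mod_eq_of_lt (by omega)]
  have hdiv : (m * k + (i - 1)) / m = k := by
    rw [Nat.add_comm, Nat.add_mul_div_left _ _ (by omega : 0 < m),
      Nat.div_eq_of_lt (by omega), Nat.zero_add]
  simp only [projFin, mergeK, hidx, hmod, hdiv]
  by_cases him : i = m
  · rw [if_pos (by omega : i - 1 = m - 1), if_pos him]
    congr 1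
    congr 1
    omega
  · rw [if_neg (by omega : ¬ i - 1 = m - 1), if_neg him]
    congr 1
    omega

lemma pos_LLPO_succ {m : ℕ} (hm : 1 ≤ m) : WRed (LLPOn (m + 1)) (LLPOn m) := by
  refine ⟨Set.univ, Set.univ, mergeK m, fun x => constSeq (x 1), ?_, ?_, ?_⟩
  · refine Continuous.continuousOn (continuous_pi fun j => ?_)
    by_cases hj : j % m = m - 1
    · simp only [mergeK, if_pos hj]
      exact (continuous_apply _).add (continuous_apply _)
    · simp only [mergeK, if_neg hj]
      exact continuous_apply _
  · refine Continuous.continuousOn (continuous_pi fun j => ?_)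
    exact continuous_apply 1
  · intro p hp
    refine ⟨trivial, ?_, ?_⟩
    · have hwit : ∀ i, 1 ≤ i → i ≤ m → ¬ isZeroSeq (projFin m i (mergeK m p)) →
          ∃ a, 1 ≤ a ∧ a ≤ m + 1 ∧ ¬ isZeroSeq (projFin (m + 1) a p) ∧
            (i < m → a = i) ∧ (i = m → m ≤ a) := by
        intro i h1 h2 hnz
        rw [isZeroSeq] at hnz
        push_neg at hnz
        obtain ⟨k, hk⟩ := hnz
        rw [mergeK_proj hm p h1 h2 k] at hk
        by_cases him : i = m
        · rw [if_pos him] at hk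
          by_cases ha : projFin (m + 1) m p k = 0
          · refine ⟨m + 1, by omega, le_refl _, ?_, by omega, by omega⟩
            intro hzz
            exact hk (by simp [ha, hzz k])
          · exact ⟨m, by omega, by omega, fun hzz => ha (hzz k), by omega, by omega⟩
        · rw [if_neg him] at hk
          exact ⟨i, h1, by omega, fun hzz => hk (hzz k), fun _ => rfl, by omega⟩
      refine Set.encard_le_one_iff.mpr ?_
      rintro a b ⟨ha1, ham, hanz⟩ ⟨hb1, hbm, hbnz⟩
      obtain ⟨a', ha'1, ha'm, ha'nz, ha'lt, ha'eq⟩ := hwit a ha1 ham hanz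
      obtain ⟨b', hb'1, hb'm, hb'nz, hb'lt, hb'eq⟩ := hwit b hb1 hbm hbnz
      have hab : a' = b' :=
        Set.encard_le_one_iff.mp hp a' b' ⟨ha'1, ha'm, ha'nz⟩ ⟨hb'1, hb'm, hb'nz⟩
      have haa : (a < m ∧ a' = a) ∨ (a = m ∧ m ≤ a') := by
        rcases Nat.lt_or_ge a m with hlt | hge
        · exact Or.inl ⟨hlt, ha'lt hlt⟩
        · have heq : a = m := by omega
          exact Or.inr ⟨heq, ha'eq heq⟩
      have hbb : (b < m ∧ b' = b) ∨ (b = m ∧ m ≤ b') := by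
        rcases Nat.lt_or_ge b m with hlt | hge
        · exact Or.inl ⟨hlt, hb'lt hlt⟩
        · have heq : b = m := by omega
          exact Or.inr ⟨heq, hb'eq heq⟩
      omega
    · rintro q ⟨j, hj1, hjm, hjz, rfl⟩
      refine ⟨trivial, ?_⟩
      show constSeq (pairB p (constSeq j) 1) ∈ (LLPOn (m + 1)).sol p
      have h1 : pairB p (constSeq j) 1 = j := by simp [pairB, constSeq]
      rw [h1]
      refine ⟨j, hj1, by omega, ?_, rfl⟩
      intro k
      have hzk := hjz k
      rw [mergeK_proj hm p hj1 hjm k] at hzk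
      by_cases him : j = m
      · subst him
        rw [if_pos rfl] at hzk
        omega
      · rw [if_neg him] at hzk
        exact hzk

end LLPOAux

/-- For all `n ≥ 1`: `LLPO_{n+2} <_W LLPO_{n+1} <_W LPO` (with `LPO = LPO₁`). -/
theorem LLPOn_strict : ∀ n, 1 ≤ n →
    WLt (LLPOn (n + 2)) (LLPOn (n + 1)) ∧ WLt (LLPOn (n + 1)) (LPOn 1) := by
  intro n hn
  exact ⟨⟨pos_LLPO_succ (by omega), neg_LLPO (m := n + 1) (by omega)⟩,
    ⟨pos_LLPO_LPO (by omega), neg_LPO (by omega)⟩⟩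
end

section
/- For all n ≥ 1: MLPO_{n+1} <_W MLPO_{n+2}, i.e., MLPO_{n+1} is continuously Weihrauch reducible to MLPO_{n+2} but not conversely. -/
open Filter Topology

/-! ### Auxiliary lemmas for `MLPOn_strict` -/

lemma projFin_def' (m i : ℕ) (r : Baire) (k : ℕ) : projFin m i r k = r (m * k + i - 1) := rfl

lemma projFin_apply' (m i : ℕ) (hi : 1 ≤ i) (r : Baire) (k : ℕ) :
    projFin m i r k = r (m * k + (i - 1)) := by
  rw [projFin_def']; congr 1; omega

/-- Continuity on a set in Baire space gives a finite modulus for each output coordinate. -/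
lemma cyl_modulus {F : Baire → Baire} {D : Set Baire} (hF : ContinuousOn F D)
    {p : Baire} (hp : p ∈ D) (c : ℕ) :
    ∃ m : ℕ, ∀ p' ∈ D, (∀ k < m, p' k = p k) → F p' c = F p c := by
  have h1 : ContinuousWithinAt (fun x => F x c) D p :=
    ((continuous_apply c).tendsto (F p)).comp (hF p hp)
  have h2 : {x : Baire | F x c = F p c} ∈ nhdsWithin p D :=
    h1 (IsOpen.mem_nhds (isOpen_discrete _) (Set.mem_singleton (F p c)))
  rw [mem_nhdsWithin] at h2
  obtain ⟨U, hUopen, hpU, hUsub⟩ := h2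
  obtain ⟨I, u, hIu, hcyl⟩ := isOpen_pi_iff.mp hUopen p hpU
  refine ⟨(I.sup id) + 1, fun p' hp' hagree => ?_⟩
  have hpU' : p' ∈ U := by
    apply hcyl
    intro i hi
    rw [Finset.mem_coe] at hi
    have hle : i ≤ I.sup id := Finset.le_sup (f := id) hi
    rw [hagree i (by omega)]
    exact (hIu i hi).2
  exact hUsub ⟨hpU', hp'⟩

lemma finset_exists_not_mem {s t : Finset ℕ} (h : s ⊆ t) (hc : s.card < t.card) :
    ∃ x ∈ t, x ∉ s := by
  refine Finset.exists_of_ssubset (h.ssubset_of_ne ?_)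
  intro he
  rw [he] at hc
  omega

/-- For all `n ≥ 1`: `MLPO_{n+1} <_W MLPO_{n+2}`. -/
theorem MLPOn_strict : ∀ n, 1 ≤ n → WLt (MLPOn (n + 1)) (MLPOn (n + 2)) := by
  intro n _hn
  constructor
  · -- MLPO_{n+1} ≤_W MLPO_{n+2}
    refine ⟨Set.univ, Set.univ,
      (fun r => fun j => if j % (n + 2) = n + 1 then 1
        else r ((n + 1) * (j / (n + 2)) + j % (n + 2))),
      psnd, ?_, ?_, ?_⟩
    · refine Continuous.continuousOn (continuous_pi fun j => ?_)
      by_cases h : j % (n + 2) = n + 1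
      · simp only [h, if_pos]
        exact continuous_const
      · simp only [h, if_neg, if_false]
        exact continuous_apply _
    · exact (continuous_pi fun k => continuous_apply _).continuousOn
    · intro p hp
      obtain ⟨i, hi1, hi2, hiz⟩ := hp
      have hproj : ∀ (i' : ℕ), 1 ≤ i' → i' ≤ n + 1 → ∀ k,
          projFin (n + 2) i' (fun j => if j % (n + 2) = n + 1 then 1
            else p ((n + 1) * (j / (n + 2)) + j % (n + 2))) k = projFin (n + 1) i' p k := by
        intro i' h1 h2 k
        rw [projFin_apply' _ _ h1, projFin_apply' _ _ h1]
        have hmod : ((n + 2) * k + (i' - 1)) % (n + 2) = i' - 1 := by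
          rw [Nat.mul_add_mod]; exact Nat.mod_eq_of_lt (by omega)
        have hdiv : ((n + 2) * k + (i' - 1)) / (n + 2) = k := by
          rw [Nat.mul_add_div (by omega), Nat.div_eq_of_lt (by omega)]; omega
        simp only [hmod, hdiv]

        rw [if_neg (by omega)]
      have hlast : ∀ k,
          projFin (n + 2) (n + 2) (fun j => if j % (n + 2) = n + 1 then 1
            else p ((n + 1) * (j / (n + 2)) + j % (n + 2))) k = 1 := by
        intro k
        rw [projFin_apply' _ _ (by omega)]
        have hmod : ((n + 2) * k + (n + 2 - 1)) % (n + 2) = n + 1 := by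
          rw [Nat.mul_add_mod]
          have : n + 2 - 1 = n + 1 := by omega
          rw [this]
          exact Nat.mod_eq_of_lt (by omega)
        show (if ((n + 2) * k + (n + 2 - 1)) % (n + 2) = n + 1 then 1
          else p ((n + 1) * (((n + 2) * k + (n + 2 - 1)) / (n + 2)) + ((n + 2) * k + (n + 2 - 1)) % (n + 2))) = 1
        rw [if_pos hmod]
      refine ⟨trivial, ⟨i, hi1, by omega, fun k => ?_⟩, ?_⟩
      · rw [hproj i hi1 hi2 k]; exact hiz k
      · intro q hq
        obtain ⟨i', hi'1, hi'2, hz', hq'⟩ := hq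
        have hi'le : i' ≤ n + 1 := by
          by_contra hgt
          have : i' = n + 2 := by omega
          subst this
          have := hz' 0
          rw [hlast 0] at this
          exact one_ne_zero this
        refine ⟨trivial, ⟨i', hi'1, hi'le, fun k => ?_, ?_⟩⟩
        · rw [← hproj i' hi'1 hi'le k]; exact hz' k
        · rw [psnd_pairB]; exact hq'
  · -- ¬ (MLPO_{n+2} ≤_W MLPO_{n+1})
    rintro ⟨Kd, Hd, K, H, hK, hH, hred⟩
    have key : ∀ t, t ≤ n + 1 → ∃ (r : Baire) (I J : Finset ℕ),
        I.card = t ∧ J.card = t ∧ I ⊆ Finset.Icc 1 (n + 1) ∧ J ⊆ Finset.Icc 1 (n + 2) ∧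
        (∀ i, 1 ≤ i → i ≤ n + 2 → (isZeroSeq (projFin (n + 2) i r) ↔ i ∉ J)) ∧
        (∀ i ∈ I, ¬ isZeroSeq (projFin (n + 1) i (K r))) := by
      intro t
      induction t with
      | zero =>
        intro _
        refine ⟨fun _ => 0, ∅, ∅, rfl, rfl, by simp, by simp, ?_, by simp⟩
        intro i _ _
        exact iff_of_true (fun k => rfl) (Finset.notMem_empty i)
      | succ t ih =>
        intro ht
        obtain ⟨r, I, J, hIc, hJc, hIs, hJs, hzc, hkill⟩ := ih (by omega)
        have hJcard : J.card < (Finset.Icc 1 (n + 2)).card := by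
          rw [Nat.card_Icc]; omega
        obtain ⟨j0, hj0t, hj0J⟩ := finset_exists_not_mem hJs hJcard
        rw [Finset.mem_Icc] at hj0t
        have hrdom : r ∈ (MLPOn (n + 2)).dom :=
          ⟨j0, hj0t.1, hj0t.2, (hzc j0 hj0t.1 hj0t.2).mpr hj0J⟩
        obtain ⟨hrKd, hKrdom, hsol⟩ := hred r hrdom
        obtain ⟨i, hi1, hi2, hiz⟩ := hKrdom
        have hiI : i ∉ I := fun h => hkill i h hiz
        have hqsol : constSeq i ∈ (MLPOn (n + 1)).sol (K r) := ⟨i, hi1, hi2, hiz, rfl⟩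
        obtain ⟨hpairHd, hHsol⟩ := hsol _ hqsol
        obtain ⟨j, hj1, hj2, hjz, hHeq⟩ := hHsol
        have hjJ : j ∉ J := (hzc j hj1 hj2).mp hjz
        -- moduli
        obtain ⟨mH, hmH⟩ := cyl_modulus hH hpairHd 0
        have hKmod : ∀ i' : ℕ, ∃ m, ∀ r' ∈ Kd, i' ∈ I → (∀ k < m, r' k = r k) →
            ¬ isZeroSeq (projFin (n + 1) i' (K r')) := by
          intro i'
          by_cases hi' : i' ∈ I
          · have hnz := hkill i' hi'
            rw [isZeroSeq] at hnz
            push_neg at hnz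
            obtain ⟨k0, hk0⟩ := hnz
            obtain ⟨m, hm⟩ := cyl_modulus hK hrKd ((n + 1) * k0 + i' - 1)
            refine ⟨m, fun r' hr' _ hag hz => ?_⟩
            apply hk0
            rw [projFin_def'] at hk0 ⊢
            rw [← hm r' hr' hag]
            have := hz k0
            rw [projFin_def'] at this
            exact this
          · exact ⟨0, fun r' _ h _ => absurd h hi'⟩
        choose mf hmf using hKmod
        set M : ℕ := max mH (I.sup mf) with hM
        set r' : Baire := fun k => if k % (n + 2) = j - 1 ∧ M ≤ k then 1 else r k with hr'
        have F1 : ∀ k < M, r' k = r k := by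
          intro k hk
          rw [hr']
          exact if_neg (fun hcon => by omega)
        have F2 : ¬ isZeroSeq (projFin (n + 2) j r') := by
          intro hz
          have := hz M
          rw [projFin_apply' _ _ hj1] at this
          rw [hr'] at this
          simp only at this
          rw [if_pos ?_] at this
          · exact one_ne_zero this
          constructor
          · rw [Nat.mul_add_mod]; exact Nat.mod_eq_of_lt (by omega)
          · nlinarith [Nat.le_mul_of_pos_left M (show 0 < n + 2 by omega)]
        have F3 : ∀ i'', 1 ≤ i'' → i'' ≤ n + 2 → i'' ≠ j →
            projFin (n + 2) i'' r' = projFin (n + 2) i'' r := by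
          intro i'' h1 h2 hne
          funext k
          rw [projFin_apply' _ _ h1, projFin_apply' _ _ h1, hr']
          refine if_neg (fun hcon => ?_)
          have hmod : ((n + 2) * k + (i'' - 1)) % (n + 2) = i'' - 1 := by
            rw [Nat.mul_add_mod]; exact Nat.mod_eq_of_lt (by omega)
          rw [hmod] at hcon
          omega
        have hzc' : ∀ i'', 1 ≤ i'' → i'' ≤ n + 2 →
            (isZeroSeq (projFin (n + 2) i'' r') ↔ i'' ∉ insert j J) := by
          intro i'' h1 h2
          by_cases hne : i'' = j
          · subst hne
            exact iff_of_false F2 (by simp)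
          · rw [F3 i'' h1 h2 hne, hzc i'' h1 h2]
            simp [hne]
        -- r' is in the domain
        have hJc' : (insert j J).card = t + 1 := by
          rw [Finset.card_insert_of_notMem hjJ, hJc]
        have hJs' : insert j J ⊆ Finset.Icc 1 (n + 2) :=
          Finset.insert_subset (Finset.mem_Icc.mpr ⟨hj1, hj2⟩) hJs
        have hJcard' : (insert j J).card < (Finset.Icc 1 (n + 2)).card := by
          rw [Nat.card_Icc, hJc']; omega
        obtain ⟨j1, hj1t, hj1J⟩ := finset_exists_not_mem hJs' hJcard'
        rw [Finset.mem_Icc] at hj1t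
        have hr'dom : r' ∈ (MLPOn (n + 2)).dom :=
          ⟨j1, hj1t.1, hj1t.2, (hzc' j1 hj1t.1 hj1t.2).mpr hj1J⟩
        obtain ⟨hr'Kd, _, hsol'⟩ := hred r' hr'dom
        -- the new kill invariant
        have hkill' : ∀ i' ∈ insert i I, ¬ isZeroSeq (projFin (n + 1) i' (K r')) := by
          intro i' hi'
          rcases Finset.mem_insert.mp hi' with heq | hmem
          · subst heq
            intro hz
            have hq'sol : constSeq i' ∈ (MLPOn (n + 1)).sol (K r') := ⟨i', hi1, hi2, hz, rfl⟩
            obtain ⟨hpair'Hd, hH'sol⟩ := hsol' _ hq'sol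
            obtain ⟨j', hj'1, hj'2, hj'z, hH'eq⟩ := hH'sol
            have hj'ne : j' ≠ j := by
              intro he; subst he; exact F2 hj'z
            have hagree : ∀ k < mH, pairB r' (constSeq i') k = pairB r (constSeq i') k := by
              intro k hk
              show (if k % 2 = 0 then r' (k / 2) else constSeq i' (k / 2)) =
                (if k % 2 = 0 then r (k / 2) else constSeq i' (k / 2))
              by_cases hpar : k % 2 = 0
              · rw [if_pos hpar, if_pos hpar, F1 (k / 2) (by omega)]
              · rw [if_neg hpar, if_neg hpar]
            have hval := hmH (pairB r' (constSeq i')) hpair'Hd hagree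
            rw [hH'eq, hHeq] at hval
            exact hj'ne hval
          · exact hmf i' r' hr'Kd hmem
              (fun k hk => F1 k (lt_of_lt_of_le hk (le_trans (Finset.le_sup hmem) (le_max_right _ _))))
        refine ⟨r', insert i I, insert j J, ?_, hJc', ?_, hJs', hzc', hkill'⟩
        · rw [Finset.card_insert_of_notMem hiI, hIc]
        · exact Finset.insert_subset (Finset.mem_Icc.mpr ⟨hi1, hi2⟩) hIs
    -- final contradiction
    obtain ⟨r, I, J, hIc, hJc, hIs, hJs, hzc, hkill⟩ := key (n + 1) le_rfl
    have hJcard : J.card < (Finset.Icc 1 (n + 2)).card := by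
      rw [Nat.card_Icc]; omega
    obtain ⟨j0, hj0t, hj0J⟩ := finset_exists_not_mem hJs hJcard
    rw [Finset.mem_Icc] at hj0t
    have hrdom : r ∈ (MLPOn (n + 2)).dom :=
      ⟨j0, hj0t.1, hj0t.2, (hzc j0 hj0t.1 hj0t.2).mpr hj0J⟩
    obtain ⟨_, hKrdom, _⟩ := hred r hrdom
    obtain ⟨i, hi1, hi2, hiz⟩ := hKrdom
    have hIeq : I = Finset.Icc 1 (n + 1) :=
      Finset.eq_of_subset_of_card_le hIs (by rw [Nat.card_Icc, hIc]; omega)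
    exact hkill i (hIeq ▸ Finset.mem_Icc.mpr ⟨hi1, hi2⟩) hiz
end
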